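/- In the unlearning setup, for every integer k ≥ 1 one has E Tr(J_0ᵀ J_1ᵀ ⋯ J_{k−1}ᵀ J_{k−1} ⋯ J_1 J_0) ≥ Tr(M_k) = Tr(J^{2k}) + Tr(N_k), where the expectation is over the Bernoulli batch selections. Consequently, if Tr(N_k) → ∞ as k → ∞, then E‖w_k‖² → ∞ as k → ∞. -/

import Mathlib

open Matrix Filter Finset Set
open scoped BigOperators

noncomputable section

/-- Frobenius norm of a real square matrix. -/
def frob {n : Type*} [Fintype n] (M : Matrix n n ℝ) : ℝ :=
  Real.sqrt (∑ i, ∑ j, (M i j) ^ 2)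

open Classical in
/-- The positive semidefinite square root of a matrix (junk value `0` on non-PSD input). -/
def psdSqrt {n : Type*} [Fintype n] [DecidableEq n] (A : Matrix n n ℝ) : Matrix n n ℝ :=
  if h : A.PosSemidef then
    (h.1.eigenvectorUnitary : Matrix n n ℝ) * Matrix.diagonal (RCLike.ofReal ∘ Real.sqrt ∘ h.1.eigenvalues) *
      (star h.1.eigenvectorUnitary : Matrix n n ℝ)
  else 0

open Classical in
/-- The largest eigenvalue of a symmetric real matrix (junk value `0` otherwise). -/
def lamMax {n : Type*} [Fintype n] [DecidableEq n] (A : Matrix n n ℝ) : ℝ :=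
  if h : A.IsHermitian then ⨆ i, h.eigenvalues i else 0

/-- Probability of observing the Bernoulli(B/n) selection pattern `x`. -/
def selProb (n B : ℕ) (x : Fin n → Bool) : ℝ :=
  ∏ i, if x i then (B : ℝ) / n else 1 - (B : ℝ) / n

/-- Average Hessian of a family. -/
def Hbar {d n : ℕ} (H : Fin n → Matrix (Fin d) (Fin d) ℝ) : Matrix (Fin d) (Fin d) ℝ :=
  (n : ℝ)⁻¹ • ∑ i, H i

/-- Mean update operator `J = I − η(1−α)H_R + ηα H_F`. -/
def Jbar {d nr nf : ℕ} (η α : ℝ) (HR : Fin nr → Matrix (Fin d) (Fin d) ℝ)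
    (HF : Fin nf → Matrix (Fin d) (Fin d) ℝ) : Matrix (Fin d) (Fin d) ℝ :=
  1 - (η * (1 - α)) • Hbar HR + (η * α) • Hbar HF

/-- Random update operator for the batch-selection pattern `x`. -/
def Jop {d nr nf : ℕ} (η α : ℝ) (B : ℕ) (HR : Fin nr → Matrix (Fin d) (Fin d) ℝ)
    (HF : Fin nf → Matrix (Fin d) (Fin d) ℝ)
    (x : (Fin nr → Bool) × (Fin nf → Bool)) : Matrix (Fin d) (Fin d) ℝ :=
  1 - (η * (1 - α) / B) • (∑ r, if x.1 r then HR r else 0)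
    + (η * α / B) • (∑ f, if x.2 f then HF f else 0)

/-- `C_r = η²(1−α)²(1/n_r)(1/B − 1/n_r)`. -/
def Crc (η α : ℝ) (B nr : ℕ) : ℝ :=
  η ^ 2 * (1 - α) ^ 2 * (nr : ℝ)⁻¹ * ((B : ℝ)⁻¹ - (nr : ℝ)⁻¹)

/-- `C_f = η²α²(1/n_f)(1/B − 1/n_f)`. -/
def Cfc (η α : ℝ) (B nf : ℕ) : ℝ :=
  η ^ 2 * α ^ 2 * (nf : ℝ)⁻¹ * ((B : ℝ)⁻¹ - (nf : ℝ)⁻¹)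

/-- Noise-accumulation matrices `N_k`. -/
def Nmat {d nr nf : ℕ} (η α : ℝ) (B : ℕ) (HR : Fin nr → Matrix (Fin d) (Fin d) ℝ)
    (HF : Fin nf → Matrix (Fin d) (Fin d) ℝ) : ℕ → Matrix (Fin d) (Fin d) ℝ
  | 0 => 1
  | k + 1 =>
      Cfc η α B nf • ∑ f, HF f * Nmat η α B HR HF k * HF f
        + Crc η α B nr • ∑ r, HR r * Nmat η α B HR HF k * HR r

/-- `W_k = J_{k−1} ⋯ J_1 J_0` for a finite sequence of batch selections. -/
def Wk {d nr nf : ℕ} (η α : ℝ) (B : ℕ) (HR : Fin nr → Matrix (Fin d) (Fin d) ℝ)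
    (HF : Fin nf → Matrix (Fin d) (Fin d) ℝ) {k : ℕ}
    (s : Fin k → (Fin nr → Bool) × (Fin nf → Bool)) : Matrix (Fin d) (Fin d) ℝ :=
  (List.ofFn fun i => Jop η α B HR HF (s i)).reverse.prod

/-- `E‖w_k‖² = E Tr(W_k W_kᵀ)`, the expectation taken over the i.i.d. Bernoulli
batch selections of the `k` steps. -/
def Ewk2 {d nr nf : ℕ} (η α : ℝ) (B : ℕ) (HR : Fin nr → Matrix (Fin d) (Fin d) ℝ)
    (HF : Fin nf → Matrix (Fin d) (Fin d) ℝ) (k : ℕ) : ℝ :=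
  ∑ s : Fin k → (Fin nr → Bool) × (Fin nf → Bool),
    (∏ i, selProb nr B (s i).1 * selProb nf B (s i).2) *
      (Wk η α B HR HF s * (Wk η α B HR HF s)ᵀ).trace

/-- `E[(e₁ᵀ w_k)²]`, i.e. the `(i0,i0)` entry of `E[W_k W_kᵀ]`. -/
def Ee1 {d nr nf : ℕ} (η α : ℝ) (B : ℕ) (HR : Fin nr → Matrix (Fin d) (Fin d) ℝ)
    (HF : Fin nf → Matrix (Fin d) (Fin d) ℝ) (i0 : Fin d) (k : ℕ) : ℝ :=
  ∑ s : Fin k → (Fin nr → Bool) × (Fin nf → Bool),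
    (∏ i, selProb nr B (s i).1 * selProb nf B (s i).2) *
      ((Wk η α B HR HF s * (Wk η α B HR HF s)ᵀ) i0 i0)

/-- Mixed Hessian `D_{rf} = C'_r H_r^R + C'_f H_f^F` for a retain/forget pair. -/
def Drf {d nr nf : ℕ} (Cr' Cf' : ℝ) (HR : Fin nr → Matrix (Fin d) (Fin d) ℝ)
    (HF : Fin nf → Matrix (Fin d) (Fin d) ℝ) (p : Fin nr × Fin nf) :
    Matrix (Fin d) (Fin d) ℝ :=
  Cr' • HR p.1 + Cf' • HF p.2

/-- Mix-Hessian `D = (1/(n_r n_f)) Σ_{r,f} D_{rf}`. -/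
def Dmix {d nr nf : ℕ} (Cr' Cf' : ℝ) (HR : Fin nr → Matrix (Fin d) (Fin d) ℝ)
    (HF : Fin nf → Matrix (Fin d) (Fin d) ℝ) : Matrix (Fin d) (Fin d) ℝ :=
  ((nr : ℝ) * nf)⁻¹ • ∑ p : Fin nr × Fin nf, Drf Cr' Cf' HR HF p

/-- Mix-coherence matrix `S_{(r,f),(r',f')} = ‖D_{rf}^{1/2} D_{r'f'}^{1/2}‖_F`. -/
def Smat {d nr nf : ℕ} (Cr' Cf' : ℝ) (HR : Fin nr → Matrix (Fin d) (Fin d) ℝ)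
    (HF : Fin nf → Matrix (Fin d) (Fin d) ℝ) :
    Matrix (Fin nr × Fin nf) (Fin nr × Fin nf) ℝ :=
  Matrix.of fun p q =>
    frob (psdSqrt (Drf Cr' Cf' HR HF p) * psdSqrt (Drf Cr' Cf' HR HF q))

/-- Unlearning coherence `σ = λ_max(S) / max_{(r,f)} λ_max(D_{rf})`. -/
def cohSigma {d nr nf : ℕ} (Cr' Cf' : ℝ) (HR : Fin nr → Matrix (Fin d) (Fin d) ℝ)
    (HF : Fin nf → Matrix (Fin d) (Fin d) ℝ) : ℝ :=
  lamMax (Smat Cr' Cf' HR HF) / ⨆ p : Fin nr × Fin nf, lamMax (Drf Cr' Cf' HR HF p)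

/-- Stacked filter-weight vector of the two-layer ReLU CNN signal-plus-noise model. -/
def wvec (d mfil : ℕ) (μ ξi : Fin d → ℝ) (yi : ℝ)
    (ai bi : Bool → Fin mfil → Bool) : (Bool × Fin mfil) × Fin d → ℝ :=
  fun p =>
    ((if p.1.1 then (1 : ℝ) else -1) / mfil) *
      ((if ai p.1.1 p.1.2 then (1 : ℝ) else 0) * μ p.2 +
        (if bi p.1.1 p.1.2 then (1 : ℝ) else 0) * yi * ξi p.2)

/-- Per-sample Hessian `H_i = ℓ''_i w_i w_iᵀ` of the signal-plus-noise model. -/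
def hessCNN (d mfil : ℕ) (μ ξi : Fin d → ℝ) (yi ℓi : ℝ)
    (ai bi : Bool → Fin mfil → Bool) :
    Matrix ((Bool × Fin mfil) × Fin d) ((Bool × Fin mfil) × Fin d) ℝ :=
  ℓi • vecMulVec (wvec d mfil μ ξi yi ai bi) (wvec d mfil μ ξi yi ai bi)

/-- Mixed Hessian `D_{rf} = C'_r H_r + C'_f H_{n_r+f}` in the CNN model, with the
retain set given by the first `n_r` samples and the forget set by the last `n_f`. -/
def DrfCNN (d mfil nr nf : ℕ) (μ : Fin d → ℝ) (ξ : Fin (nr + nf) → Fin d → ℝ)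
    (y ℓ : Fin (nr + nf) → ℝ) (a b : Fin (nr + nf) → Bool → Fin mfil → Bool)
    (Cr' Cf' : ℝ) (p : Fin nr × Fin nf) :
    Matrix ((Bool × Fin mfil) × Fin d) ((Bool × Fin mfil) × Fin d) ℝ :=
  Cr' • hessCNN d mfil μ (ξ (Fin.castAdd nf p.1)) (y (Fin.castAdd nf p.1))
        (ℓ (Fin.castAdd nf p.1)) (a (Fin.castAdd nf p.1)) (b (Fin.castAdd nf p.1))
    + Cf' • hessCNN d mfil μ (ξ (Fin.natAdd nr p.2)) (y (Fin.natAdd nr p.2))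
        (ℓ (Fin.natAdd nr p.2)) (a (Fin.natAdd nr p.2)) (b (Fin.natAdd nr p.2))

/-- Mix-coherence matrix of the CNN model. -/
def SmatCNN (d mfil nr nf : ℕ) (μ : Fin d → ℝ) (ξ : Fin (nr + nf) → Fin d → ℝ)
    (y ℓ : Fin (nr + nf) → ℝ) (a b : Fin (nr + nf) → Bool → Fin mfil → Bool)
    (Cr' Cf' : ℝ) : Matrix (Fin nr × Fin nf) (Fin nr × Fin nf) ℝ :=
  Matrix.of fun p q =>
    frob (psdSqrt (DrfCNN d mfil nr nf μ ξ y ℓ a b Cr' Cf' p) *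
      psdSqrt (DrfCNN d mfil nr nf μ ξ y ℓ a b Cr' Cf' q))



namespace Stmt0Aux
open Matrix Finset

def ind (b : Bool) : ℝ := if b then 1 else 0

lemma sum_pi_bool {n : ℕ} (g : Fin n → Bool → ℝ) :
    ∑ x : Fin n → Bool, ∏ i, g i (x i) = ∏ i, (g i true + g i false) := by
  rw [← Fintype.prod_sum fun i b => g i b]
  exact Finset.prod_congr rfl fun i _ => by simp

lemma sum_selProb (n B : ℕ) : ∑ x : Fin n → Bool, selProb n B x = 1 := by
  unfold selProb
  rw [sum_pi_bool (g := fun i b => if b then (B : ℝ) / n else 1 - (B : ℝ) / n)]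
  simp

lemma selProb_nonneg {n B : ℕ} (hB : B ≤ n) (x : Fin n → Bool) : 0 ≤ selProb n B x := by
  apply Finset.prod_nonneg
  intro i _
  have h1 : (B : ℝ) / n ≤ 1 := by
    rcases Nat.eq_zero_or_pos n with h | h
    · subst h
      simp [Nat.le_zero.mp hB]
    · rw [div_le_one (by exact_mod_cast h)]
      exact_mod_cast hB
  have h0 : (0 : ℝ) ≤ (B : ℝ) / n := by positivity
  split <;> linarith

lemma momentPair {n B : ℕ} (r r' : Fin n) :
    ∑ x : Fin n → Bool, selProb n B x * (ind (x r) * ind (x r'))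
      = if r = r' then (B : ℝ) / n else ((B : ℝ) / n) ^ 2 := by
  set p : ℝ := (B : ℝ) / n with hp
  have key : ∀ x : Fin n → Bool, selProb n B x * (ind (x r) * ind (x r'))
      = ∏ i, ((if x i then p else 1 - p) *
          ((if i = r then ind (x i) else 1) * (if i = r' then ind (x i) else 1))) := by
    intro x
    rw [Finset.prod_mul_distrib, Finset.prod_mul_distrib, Finset.prod_ite_eq',
      Finset.prod_ite_eq']
    simp [selProb, hp]
  rw [Finset.sum_congr rfl fun x _ => key x,
    sum_pi_bool (g := fun i b => (if b then p else 1 - p) *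
      ((if i = r then ind b else 1) * (if i = r' then ind b else 1)))]
  have hg : ∀ i : Fin n,
      ((if (true : Bool) then p else 1 - p) *
          ((if i = r then ind true else 1) * (if i = r' then ind true else 1)) +
        (if (false : Bool) then p else 1 - p) *
          ((if i = r then ind false else 1) * (if i = r' then ind false else 1)))
      = if i = r ∨ i = r' then p else 1 := by
    intro i
    by_cases h1 : i = r <;> by_cases h2 : i = r' <;> simp [h1, h2, ind] <;> ring
  rw [Finset.prod_congr rfl fun i _ => hg i]
  by_cases hrr : r = r'
  · subst hrr
    simp only [or_self]
    rw [Finset.prod_ite_eq', if_pos (Finset.mem_univ r)]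
    simp
  · have hsplit : ∀ i : Fin n, (if i = r ∨ i = r' then p else 1)
        = (if i = r then p else 1) * (if i = r' then p else 1) := by
      intro i
      by_cases h1 : i = r <;> by_cases h2 : i = r' <;>
        simp [h1, h2] <;> simp_all
    rw [Finset.prod_congr rfl fun i _ => hsplit i, Finset.prod_mul_distrib,
      Finset.prod_ite_eq', Finset.prod_ite_eq', if_pos (Finset.mem_univ r),
      if_pos (Finset.mem_univ r'), if_neg hrr]
    ring

lemma ind_sq (b : Bool) : ind b * ind b = ind b := by cases b <;> simp [ind]

lemma moment1 {n B : ℕ} (r : Fin n) :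
    ∑ x : Fin n → Bool, selProb n B x * ind (x r) = (B : ℝ) / n := by
  have h := momentPair (n := n) (B := B) r r
  simpa [ind_sq] using h

end Stmt0Aux

namespace Stmt0Aux
open Matrix Finset

variable {d n : ℕ}

def Asel (H : Fin n → Matrix (Fin d) (Fin d) ℝ) (x : Fin n → Bool) :
    Matrix (Fin d) (Fin d) ℝ := ∑ i, if x i then H i else 0

lemma Asel_eq (H : Fin n → Matrix (Fin d) (Fin d) ℝ) (x : Fin n → Bool) :
    Asel H x = ∑ i, ind (x i) • H i := by
  unfold Asel
  refine Finset.sum_congr rfl fun i _ => ?_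
  by_cases h : x i <;> simp [h, ind]

lemma Econst {B : ℕ} (Z : Matrix (Fin d) (Fin d) ℝ) :
    ∑ x : Fin n → Bool, selProb n B x • Z = Z := by
  rw [← Finset.sum_smul, sum_selProb, one_smul]

lemma ElinL {B : ℕ} (H : Fin n → Matrix (Fin d) (Fin d) ℝ) (U : Matrix (Fin d) (Fin d) ℝ) :
    ∑ x : Fin n → Bool, selProb n B x • (Asel H x * U)
      = ((B : ℝ) / n) • ((∑ i, H i) * U) := by
  have h1 : ∀ x : Fin n → Bool, Asel H x * U = ∑ i, ind (x i) • (H i * U) := by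
    intro x
    rw [Asel_eq, Finset.sum_mul]
    exact Finset.sum_congr rfl fun i _ => smul_mul_assoc _ _ _
  simp_rw [h1, Finset.smul_sum, smul_smul]
  rw [Finset.sum_comm]
  rw [Finset.sum_congr rfl fun i (_ : i ∈ Finset.univ) =>
    (by rw [← Finset.sum_smul, moment1] :
      (∑ x : Fin n → Bool, (selProb n B x * ind (x i)) • (H i * U)) = ((B : ℝ)/n) • (H i * U))]
  rw [← Finset.smul_sum, ← Finset.sum_mul]

lemma ElinR {B : ℕ} (H : Fin n → Matrix (Fin d) (Fin d) ℝ) (U : Matrix (Fin d) (Fin d) ℝ) :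
    ∑ x : Fin n → Bool, selProb n B x • (U * Asel H x)
      = ((B : ℝ) / n) • (U * ∑ i, H i) := by
  have h1 : ∀ x : Fin n → Bool, U * Asel H x = ∑ i, ind (x i) • (U * H i) := by
    intro x
    rw [Asel_eq, Finset.mul_sum]
    exact Finset.sum_congr rfl fun i _ => mul_smul_comm _ _ _
  simp_rw [h1, Finset.smul_sum, smul_smul]
  rw [Finset.sum_comm]
  rw [Finset.sum_congr rfl fun i (_ : i ∈ Finset.univ) =>
    (by rw [← Finset.sum_smul, moment1] :
      (∑ x : Fin n → Bool, (selProb n B x * ind (x i)) • (U * H i)) = ((B : ℝ)/n) • (U * H i))]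
  rw [← Finset.smul_sum, ← Finset.mul_sum]

lemma Equad0 {B : ℕ} (H : Fin n → Matrix (Fin d) (Fin d) ℝ) (M : Matrix (Fin d) (Fin d) ℝ) :
    ∑ x : Fin n → Bool, selProb n B x • (Asel H x * M * Asel H x)
      = (((B : ℝ)/n) * ((B : ℝ)/n)) • ((∑ i, H i) * M * (∑ i, H i))
        + ((B : ℝ)/n - ((B : ℝ)/n) * ((B : ℝ)/n)) • (∑ i, H i * M * H i) := by
  set p : ℝ := (B : ℝ) / n with hp
  have h1 : ∀ x : Fin n → Bool, Asel H x * M * Asel H x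
      = ∑ i, ∑ j, (ind (x i) * ind (x j)) • (H i * M * H j) := by
    intro x
    rw [Asel_eq]
    rw [show (∑ i, ind (x i) • H i) * M = ∑ i, ind (x i) • (H i * M) by
      rw [Finset.sum_mul]; exact Finset.sum_congr rfl fun i _ => smul_mul_assoc _ _ _]
    rw [Finset.sum_mul_sum]
    refine Finset.sum_congr rfl fun i _ => Finset.sum_congr rfl fun j _ => ?_
    rw [smul_mul_assoc, mul_smul_comm, smul_smul]
  simp_rw [h1, Finset.smul_sum, smul_smul]
  rw [Finset.sum_comm]
  have h2 : ∀ i : Fin n,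
      (∑ x : Fin n → Bool, ∑ j, (selProb n B x * (ind (x i) * ind (x j))) • (H i * M * H j))
      = ∑ j, (if i = j then p else p ^ 2) • (H i * M * H j) := by
    intro i
    rw [Finset.sum_comm]
    exact Finset.sum_congr rfl fun j _ => by rw [← Finset.sum_smul, momentPair]
  rw [Finset.sum_congr rfl fun i _ => h2 i]
  have h3 : ∀ (i j : Fin n), (if i = j then p else p ^ 2) = p * p + (if i = j then p - p * p else 0) := by
    intro i j; split <;> ring
  simp_rw [h3, add_smul, Finset.sum_add_distrib, ite_smul, zero_smul, Finset.sum_ite_eq]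
  simp only [Finset.mem_univ, if_true]
  congr 1
  · calc ∑ i : Fin n, ∑ j : Fin n, (p * p) • (H i * M * H j)
        = (p * p) • ∑ i : Fin n, ∑ j : Fin n, (H i * M * H j) := by
          simp_rw [Finset.smul_sum]
      _ = _ := by
          congr 1
          rw [show (∑ i, H i) * M = ∑ i, H i * M from Finset.sum_mul .., Finset.sum_mul_sum]

end Stmt0Aux
namespace Stmt0Aux
open Matrix Finset

variable {d n : ℕ}

lemma Epull {B : ℕ} (c : ℝ) (Y : (Fin n → Bool) → Matrix (Fin d) (Fin d) ℝ) :
    ∑ x : Fin n → Bool, selProb n B x • (c • Y x)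
      = c • ∑ x : Fin n → Bool, selProb n B x • Y x := by
  rw [Finset.smul_sum]
  exact Finset.sum_congr rfl fun x _ => smul_comm _ _ _

lemma Equad {B : ℕ} (H : Fin n → Matrix (Fin d) (Fin d) ℝ) (c : ℝ)
    (U M : Matrix (Fin d) (Fin d) ℝ) :
    ∑ x : Fin n → Bool, selProb n B x • ((U + c • Asel H x) * M * (U + c • Asel H x))
      = U * M * U + (c * ((B : ℝ)/n)) • ((∑ i, H i) * (M * U))
        + (c * ((B : ℝ)/n)) • ((U * M) * (∑ i, H i))
        + (c * c * (((B : ℝ)/n) * ((B : ℝ)/n))) • ((∑ i, H i) * M * (∑ i, H i))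
        + (c * c * ((B : ℝ)/n - ((B : ℝ)/n) * ((B : ℝ)/n))) • (∑ i, H i * M * H i) := by
  have expand : ∀ x, (U + c • Asel H x) * M * (U + c • Asel H x)
      = U * M * U + c • (Asel H x * (M * U)) + c • ((U * M) * Asel H x)
        + (c * c) • (Asel H x * M * Asel H x) := by
    intro x
    simp only [add_mul, mul_add, smul_mul_assoc, mul_smul_comm, smul_smul, mul_assoc]
    module
  simp_rw [expand, smul_add, Finset.sum_add_distrib, Epull, Econst, ElinL, ElinR, Equad0,
    smul_smul, smul_add]
  module

end Stmt0Aux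
namespace Stmt0Aux
open Matrix Finset

variable {d nr nf : ℕ}

lemma Asel_symm {n : ℕ} (H : Fin n → Matrix (Fin d) (Fin d) ℝ)
    (hs : ∀ i, (H i)ᵀ = H i) (x : Fin n → Bool) : (Asel H x)ᵀ = Asel H x := by
  unfold Asel
  rw [Matrix.transpose_sum]
  refine Finset.sum_congr rfl fun i _ => ?_
  by_cases h : x i <;> simp [h, hs i]

lemma Jop_eq (η α : ℝ) (B : ℕ) (HR : Fin nr → Matrix (Fin d) (Fin d) ℝ)
    (HF : Fin nf → Matrix (Fin d) (Fin d) ℝ) (x : (Fin nr → Bool) × (Fin nf → Bool)) :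
    Jop η α B HR HF x
      = (1 - (η * (1 - α) / B) • Asel HR x.1) + (η * α / B) • Asel HF x.2 := rfl

lemma Jop_symm (η α : ℝ) (B : ℕ) (HR : Fin nr → Matrix (Fin d) (Fin d) ℝ)
    (HF : Fin nf → Matrix (Fin d) (Fin d) ℝ)
    (hsR : ∀ r, (HR r)ᵀ = HR r) (hsF : ∀ f, (HF f)ᵀ = HF f)
    (x : (Fin nr → Bool) × (Fin nf → Bool)) :
    (Jop η α B HR HF x)ᵀ = Jop η α B HR HF x := by
  rw [Jop_eq, transpose_add, transpose_sub, transpose_one, transpose_smul, transpose_smul,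
    Asel_symm HR hsR, Asel_symm HF hsF]

lemma Jbar_eq (η α : ℝ) (HR : Fin nr → Matrix (Fin d) (Fin d) ℝ)
    (HF : Fin nf → Matrix (Fin d) (Fin d) ℝ) :
    Jbar η α HR HF = (1 - (η * (1 - α) * (nr : ℝ)⁻¹) • ∑ r, HR r)
      + (η * α * (nf : ℝ)⁻¹) • ∑ f, HF f := by
  unfold Jbar Hbar
  rw [smul_smul, smul_smul]

lemma Jbar_symm (η α : ℝ) (HR : Fin nr → Matrix (Fin d) (Fin d) ℝ)
    (HF : Fin nf → Matrix (Fin d) (Fin d) ℝ)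
    (hsR : ∀ r, (HR r)ᵀ = HR r) (hsF : ∀ f, (HF f)ᵀ = HF f) :
    (Jbar η α HR HF)ᵀ = Jbar η α HR HF := by
  rw [Jbar_eq, transpose_add, transpose_sub, transpose_one, transpose_smul, transpose_smul,
    Matrix.transpose_sum, Matrix.transpose_sum]
  simp_rw [fun r => hsR r, fun f => hsF f]

/-- The noise operator `𝒩`. -/
def Nop (η α : ℝ) (B : ℕ) (HR : Fin nr → Matrix (Fin d) (Fin d) ℝ)
    (HF : Fin nf → Matrix (Fin d) (Fin d) ℝ) (M : Matrix (Fin d) (Fin d) ℝ) :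
    Matrix (Fin d) (Fin d) ℝ :=
  Cfc η α B nf • ∑ f, HF f * M * HF f + Crc η α B nr • ∑ r, HR r * M * HR r

/-- One-step expectation operator `𝒯`. -/
def Tm (η α : ℝ) (B : ℕ) (HR : Fin nr → Matrix (Fin d) (Fin d) ℝ)
    (HF : Fin nf → Matrix (Fin d) (Fin d) ℝ) (M : Matrix (Fin d) (Fin d) ℝ) :
    Matrix (Fin d) (Fin d) ℝ :=
  ∑ x : (Fin nr → Bool) × (Fin nf → Bool),
    (selProb nr B x.1 * selProb nf B x.2) •
      (Jop η α B HR HF x * M * (Jop η α B HR HF x)ᵀ)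

lemma Tm_eq (η α : ℝ) (B : ℕ) (HR : Fin nr → Matrix (Fin d) (Fin d) ℝ)
    (HF : Fin nf → Matrix (Fin d) (Fin d) ℝ)
    (hB : (B : ℝ) ≠ 0) (hnr : (nr : ℝ) ≠ 0) (hnf : (nf : ℝ) ≠ 0)
    (hsR : ∀ r, (HR r)ᵀ = HR r) (hsF : ∀ f, (HF f)ᵀ = HF f)
    (M : Matrix (Fin d) (Fin d) ℝ) :
    Tm η α B HR HF M
      = Jbar η α HR HF * M * (Jbar η α HR HF)ᵀ + Nop η α B HR HF M := by
  have step1 : Tm η α B HR HF M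
      = ∑ a : Fin nr → Bool, selProb nr B a •
          ∑ b : Fin nf → Bool, selProb nf B b •
            (((1 - (η*(1-α)/B) • Asel HR a) + (η*α/B) • Asel HF b) * M *
             ((1 - (η*(1-α)/B) • Asel HR a) + (η*α/B) • Asel HF b)) := by
    unfold Tm
    rw [Fintype.sum_prod_type]
    refine Finset.sum_congr rfl fun a _ => ?_
    rw [Finset.smul_sum]
    refine Finset.sum_congr rfl fun b _ => ?_
    rw [mul_smul]
    congr 1
    congr 1
    rw [Jop_symm η α B HR HF hsR hsF]
    rfl
  rw [step1]
  have hsub : ∀ (a : Fin nr → Bool), (1 - (η*(1-α)/B) • Asel HR a)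
      = (1 + (-(η*(1-α)/B)) • Asel HR a) := by
    intro a; rw [neg_smul, ← sub_eq_add_neg]
  simp_rw [hsub]
  simp_rw [Equad HF (η*α/B)]
  have hT2 : ∀ (a : Fin nr → Bool),
      (∑ f, HF f) * (M * (1 + (-(η*(1-α)/B)) • Asel HR a))
      = (∑ f, HF f) * M + (-(η*(1-α)/B)) • (((∑ f, HF f) * M) * Asel HR a) := by
    intro a
    simp only [mul_add, mul_one, mul_smul_comm, mul_assoc]
  have hT3 : ∀ (a : Fin nr → Bool),
      ((1 + (-(η*(1-α)/B)) • Asel HR a) * M) * (∑ f, HF f)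
      = M * (∑ f, HF f) + (-(η*(1-α)/B)) • (Asel HR a * (M * (∑ f, HF f))) := by
    intro a
    simp only [add_mul, one_mul, smul_mul_assoc, mul_assoc]
  simp_rw [hT2, hT3, smul_add, Finset.sum_add_distrib, Equad HR (-(η*(1-α)/B)) 1 M,
    Epull, Econst, ElinL, ElinR]
  have haR : η * (1 - α) * (nr : ℝ)⁻¹ = (η*(1-α)/B) * ((B:ℝ)/nr) := by
    field_simp
  have haF : η * α * (nf : ℝ)⁻¹ = (η*α/B) * ((B:ℝ)/nf) := by
    field_simp
  have hCrc : Crc η α B nr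
      = (η*(1-α)/B) * (η*(1-α)/B) * ((B:ℝ)/nr - ((B:ℝ)/nr)*((B:ℝ)/nr)) := by
    unfold Crc; field_simp
  have hCfc : Cfc η α B nf
      = (η*α/B) * (η*α/B) * ((B:ℝ)/nf - ((B:ℝ)/nf)*((B:ℝ)/nf)) := by
    unfold Cfc; field_simp
  rw [Jbar_symm η α HR HF hsR hsF, Jbar_eq]
  unfold Nop
  rw [haR, haF, hCrc, hCfc]
  simp only [sub_mul, mul_sub, add_mul, mul_add, smul_mul_assoc, mul_smul_comm, smul_smul,
    one_mul, mul_one, mul_assoc]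
  module

end Stmt0Aux
namespace Stmt0Aux
open Matrix Finset

variable {d nr nf : ℕ}

/-- Finite-horizon expectation `E[W_k M W_kᵀ]`. -/
def Fk (η α : ℝ) (B : ℕ) (HR : Fin nr → Matrix (Fin d) (Fin d) ℝ)
    (HF : Fin nf → Matrix (Fin d) (Fin d) ℝ) (k : ℕ) (M : Matrix (Fin d) (Fin d) ℝ) :
    Matrix (Fin d) (Fin d) ℝ :=
  ∑ s : Fin k → (Fin nr → Bool) × (Fin nf → Bool),
    (∏ i, selProb nr B (s i).1 * selProb nf B (s i).2) •
      (Wk η α B HR HF s * M * (Wk η α B HR HF s)ᵀ)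

lemma Ewk2_eq_Fk (η α : ℝ) (B : ℕ) (HR : Fin nr → Matrix (Fin d) (Fin d) ℝ)
    (HF : Fin nf → Matrix (Fin d) (Fin d) ℝ) (k : ℕ) :
    Ewk2 η α B HR HF k = (Fk η α B HR HF k 1).trace := by
  unfold Ewk2 Fk
  rw [Matrix.trace_sum]
  refine Finset.sum_congr rfl fun s _ => ?_
  rw [Matrix.trace_smul, mul_one, smul_eq_mul]

lemma Fk_zero (η α : ℝ) (B : ℕ) (HR : Fin nr → Matrix (Fin d) (Fin d) ℝ)
    (HF : Fin nf → Matrix (Fin d) (Fin d) ℝ) (M : Matrix (Fin d) (Fin d) ℝ) :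
    Fk η α B HR HF 0 M = M := by
  unfold Fk
  rw [Fintype.sum_subsingleton _ (fun i : Fin 0 => i.elim0)]
  simp [Wk]

lemma Wk_cons (η α : ℝ) (B : ℕ) (HR : Fin nr → Matrix (Fin d) (Fin d) ℝ)
    (HF : Fin nf → Matrix (Fin d) (Fin d) ℝ) {k : ℕ}
    (x : (Fin nr → Bool) × (Fin nf → Bool)) (s : Fin k → (Fin nr → Bool) × (Fin nf → Bool)) :
    Wk η α B HR HF (Fin.cons x s) = Wk η α B HR HF s * Jop η α B HR HF x := by
  unfold Wk
  rw [List.ofFn_succ]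
  simp [Fin.cons_zero, Fin.cons_succ]

lemma Fk_succ (η α : ℝ) (B : ℕ) (HR : Fin nr → Matrix (Fin d) (Fin d) ℝ)
    (HF : Fin nf → Matrix (Fin d) (Fin d) ℝ) (k : ℕ) (M : Matrix (Fin d) (Fin d) ℝ) :
    Fk η α B HR HF (k+1) M = Fk η α B HR HF k (Tm η α B HR HF M) := by
  unfold Fk
  rw [← Equiv.sum_comp (Fin.consEquiv
    (fun _ : Fin (k+1) => (Fin nr → Bool) × (Fin nf → Bool)))]
  rw [Fintype.sum_prod_type]
  have hce : ∀ (x : (Fin nr → Bool) × (Fin nf → Bool))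
      (t : Fin k → (Fin nr → Bool) × (Fin nf → Bool)),
      (Fin.consEquiv (fun _ : Fin (k+1) => (Fin nr → Bool) × (Fin nf → Bool))) (x, t)
        = Fin.cons x t := fun _ _ => rfl
  simp only [hce]
  rw [Finset.sum_comm]
  refine Finset.sum_congr rfl fun t _ => ?_
  have hstep : ∀ x : (Fin nr → Bool) × (Fin nf → Bool),
      (∏ i : Fin (k+1), selProb nr B ((Fin.cons x t : Fin (k+1) →
          (Fin nr → Bool) × (Fin nf → Bool)) i).1 *
        selProb nf B ((Fin.cons x t : Fin (k+1) → (Fin nr → Bool) × (Fin nf → Bool)) i).2) •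
        (Wk η α B HR HF (Fin.cons x t) * M * (Wk η α B HR HF (Fin.cons x t))ᵀ)
      = (∏ i : Fin k, selProb nr B (t i).1 * selProb nf B (t i).2) •
          (Wk η α B HR HF t *
            ((selProb nr B x.1 * selProb nf B x.2) •
              (Jop η α B HR HF x * M * (Jop η α B HR HF x)ᵀ)) *
            (Wk η α B HR HF t)ᵀ) := by
    intro x
    rw [Fin.prod_univ_succ]
    simp only [Fin.cons_zero, Fin.cons_succ]
    rw [Wk_cons, mul_comm, mul_smul]
    congr 1
    rw [transpose_mul]
    simp only [mul_smul_comm, smul_mul_assoc, mul_assoc]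
  rw [Finset.sum_congr rfl fun x _ => hstep x]
  rw [← Finset.smul_sum, ← Finset.sum_mul, ← Matrix.mul_sum]
  rfl

lemma Fk_iter (η α : ℝ) (B : ℕ) (HR : Fin nr → Matrix (Fin d) (Fin d) ℝ)
    (HF : Fin nf → Matrix (Fin d) (Fin d) ℝ) (k : ℕ) :
    ∀ M, Fk η α B HR HF k M = (Tm η α B HR HF)^[k] M := by
  induction k with
  | zero => intro M; rw [Fk_zero]; rfl
  | succ k ih =>
      intro M
      rw [Fk_succ, ih, ← Function.iterate_succ_apply]

end Stmt0Aux
namespace Stmt0Aux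
open Matrix Finset

variable {d nr nf : ℕ}

lemma psd_smul {M : Matrix (Fin d) (Fin d) ℝ} (hM : M.PosSemidef) {c : ℝ} (hc : 0 ≤ c) :
    (c • M).PosSemidef := by
  constructor
  · show (c • M)ᴴ = c • M
    rw [conjTranspose_smul, star_trivial, hM.1]
  · intro x
    exact (hM.smul hc).2 x

lemma psd_add {M N : Matrix (Fin d) (Fin d) ℝ} (hM : M.PosSemidef) (hN : N.PosSemidef) :
    (M + N).PosSemidef := by
  constructor
  · exact hM.1.add hN.1
  · intro x
    exact (hM.add hN).2 x

lemma psd_sum {ι : Type*} (s : Finset ι) (f : ι → Matrix (Fin d) (Fin d) ℝ)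
    (h : ∀ i ∈ s, (f i).PosSemidef) : (∑ i ∈ s, f i).PosSemidef :=
  Finset.sum_induction f _ (fun _ _ ha hb => psd_add ha hb) Matrix.PosSemidef.zero h

lemma psd_conj {M : Matrix (Fin d) (Fin d) ℝ} (hM : M.PosSemidef)
    (A : Matrix (Fin d) (Fin d) ℝ) : (A * M * Aᵀ).PosSemidef := by
  have h := hM.mul_mul_conjTranspose_same A
  rwa [conjTranspose_eq_transpose_of_trivial] at h

lemma psd_trace_nonneg {M : Matrix (Fin d) (Fin d) ℝ} (hM : M.PosSemidef) :
    0 ≤ M.trace := by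
  have h : ∀ i, 0 ≤ M i i := by
    intro i
    exact hM.diag_nonneg
  exact Finset.sum_nonneg fun i _ => h i

lemma Crc_nonneg {η α : ℝ} {B n : ℕ} (hB : 0 < B) (hBn : B ≤ n) : 0 ≤ Crc η α B n := by
  unfold Crc
  have h1 : (0:ℝ) < B := by exact_mod_cast hB
  have h2 : (B:ℝ) ≤ n := by exact_mod_cast hBn
  have h3 : (n:ℝ)⁻¹ ≤ (B:ℝ)⁻¹ := by
    apply inv_anti₀ h1 h2
  have h4 : (0:ℝ) ≤ (B:ℝ)⁻¹ - (n:ℝ)⁻¹ := by linarith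
  positivity

lemma Cfc_nonneg {η α : ℝ} {B n : ℕ} (hB : 0 < B) (hBn : B ≤ n) : 0 ≤ Cfc η α B n := by
  unfold Cfc
  have h1 : (0:ℝ) < B := by exact_mod_cast hB
  have h2 : (B:ℝ) ≤ n := by exact_mod_cast hBn
  have h3 : (n:ℝ)⁻¹ ≤ (B:ℝ)⁻¹ := by
    apply inv_anti₀ h1 h2
  have h4 : (0:ℝ) ≤ (B:ℝ)⁻¹ - (n:ℝ)⁻¹ := by linarith
  positivity

lemma Nop_psd (η α : ℝ) (B : ℕ) {HR : Fin nr → Matrix (Fin d) (Fin d) ℝ}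
    {HF : Fin nf → Matrix (Fin d) (Fin d) ℝ}
    (hB : 0 < B) (hBr : B ≤ nr) (hBf : B ≤ nf)
    (hsR : ∀ r, (HR r)ᵀ = HR r) (hsF : ∀ f, (HF f)ᵀ = HF f)
    {M : Matrix (Fin d) (Fin d) ℝ} (hM : M.PosSemidef) :
    (Nop η α B HR HF M).PosSemidef := by
  apply psd_add
  · apply psd_smul _ (Cfc_nonneg hB hBf)
    apply psd_sum
    intro f _
    have := psd_conj hM (HF f)
    rwa [hsF f] at this
  · apply psd_smul _ (Crc_nonneg hB hBr)
    apply psd_sum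
    intro r _
    have := psd_conj hM (HR r)
    rwa [hsR r] at this

lemma Nmat_succ (η α : ℝ) (B : ℕ) (HR : Fin nr → Matrix (Fin d) (Fin d) ℝ)
    (HF : Fin nf → Matrix (Fin d) (Fin d) ℝ) (k : ℕ) :
    Nmat η α B HR HF (k+1) = Nop η α B HR HF (Nmat η α B HR HF k) := rfl

lemma Nmat_psd (η α : ℝ) (B : ℕ) {HR : Fin nr → Matrix (Fin d) (Fin d) ℝ}
    {HF : Fin nf → Matrix (Fin d) (Fin d) ℝ}
    (hB : 0 < B) (hBr : B ≤ nr) (hBf : B ≤ nf)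
    (hsR : ∀ r, (HR r)ᵀ = HR r) (hsF : ∀ f, (HF f)ᵀ = HF f) (k : ℕ) :
    (Nmat η α B HR HF k).PosSemidef := by
  induction k with
  | zero => exact Matrix.PosSemidef.one
  | succ k ih =>
      rw [Nmat_succ]
      exact Nop_psd η α B hB hBr hBf hsR hsF ih

lemma Tm_psd (η α : ℝ) (B : ℕ) (HR : Fin nr → Matrix (Fin d) (Fin d) ℝ)
    (HF : Fin nf → Matrix (Fin d) (Fin d) ℝ)
    (hBr : B ≤ nr) (hBf : B ≤ nf)
    {M : Matrix (Fin d) (Fin d) ℝ} (hM : M.PosSemidef) :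
    (Tm η α B HR HF M).PosSemidef := by
  apply psd_sum
  intro x _
  exact psd_smul (psd_conj hM _) (mul_nonneg (selProb_nonneg hBr _) (selProb_nonneg hBf _))

lemma Tm_add (η α : ℝ) (B : ℕ) (HR : Fin nr → Matrix (Fin d) (Fin d) ℝ)
    (HF : Fin nf → Matrix (Fin d) (Fin d) ℝ) (M N : Matrix (Fin d) (Fin d) ℝ) :
    Tm η α B HR HF (M + N) = Tm η α B HR HF M + Tm η α B HR HF N := by
  unfold Tm
  rw [← Finset.sum_add_distrib]
  refine Finset.sum_congr rfl fun x _ => ?_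
  rw [mul_add, add_mul, smul_add]

end Stmt0Aux
namespace Stmt0Aux
open Matrix Finset

variable {d nr nf : ℕ}

lemma delta_psd (η α : ℝ) (B : ℕ) (HR : Fin nr → Matrix (Fin d) (Fin d) ℝ)
    (HF : Fin nf → Matrix (Fin d) (Fin d) ℝ)
    (hB : 0 < B) (hBr : B ≤ nr) (hBf : B ≤ nf)
    (hB' : (B : ℝ) ≠ 0) (hnr' : (nr : ℝ) ≠ 0) (hnf' : (nf : ℝ) ≠ 0)
    (hsR : ∀ r, (HR r)ᵀ = HR r) (hsF : ∀ f, (HF f)ᵀ = HF f) :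
    ∀ k, 1 ≤ k → ((Tm η α B HR HF)^[k] (1 : Matrix (Fin d) (Fin d) ℝ)
      - Jbar η α HR HF ^ k * (Jbar η α HR HF ^ k)ᵀ - Nmat η α B HR HF k).PosSemidef := by
  intro k hk
  induction k, hk using Nat.le_induction with
  | base =>
      have h1 : (Tm η α B HR HF)^[1] (1 : Matrix (Fin d) (Fin d) ℝ)
          = Tm η α B HR HF 1 := congrFun (Function.iterate_one _) _
      rw [h1, Tm_eq η α B HR HF hB' hnr' hnf' hsR hsF 1]
      simp only [pow_one, mul_one, Nmat_succ,
        show Nmat η α B HR HF 0 = (1 : Matrix (Fin d) (Fin d) ℝ) from rfl]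
      have hcancel : ∀ (X Y : Matrix (Fin d) (Fin d) ℝ), X + Y - X - Y = 0 := by
        intro X Y; abel
      rw [hcancel]
      exact Matrix.PosSemidef.zero
  | succ n hn ih =>
      have hApsd : (Jbar η α HR HF ^ n * (Jbar η α HR HF ^ n)ᵀ).PosSemidef := by
        have h := psd_conj Matrix.PosSemidef.one (Jbar η α HR HF ^ n)
        rwa [mul_one] at h
      have hG : (Tm η α B HR HF)^[n] (1 : Matrix (Fin d) (Fin d) ℝ)
          = ((Tm η α B HR HF)^[n] (1 : Matrix (Fin d) (Fin d) ℝ)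
              - Jbar η α HR HF ^ n * (Jbar η α HR HF ^ n)ᵀ - Nmat η α B HR HF n)
            + Jbar η α HR HF ^ n * (Jbar η α HR HF ^ n)ᵀ + Nmat η α B HR HF n := by
        abel
      have key : (Tm η α B HR HF)^[n+1] (1 : Matrix (Fin d) (Fin d) ℝ)
          - Jbar η α HR HF ^ (n+1) * (Jbar η α HR HF ^ (n+1))ᵀ - Nmat η α B HR HF (n+1)
          = Tm η α B HR HF ((Tm η α B HR HF)^[n] (1 : Matrix (Fin d) (Fin d) ℝ)
              - Jbar η α HR HF ^ n * (Jbar η α HR HF ^ n)ᵀ - Nmat η α B HR HF n)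
            + Nop η α B HR HF (Jbar η α HR HF ^ n * (Jbar η α HR HF ^ n)ᵀ)
            + Jbar η α HR HF * Nmat η α B HR HF n * (Jbar η α HR HF)ᵀ := by
        rw [Function.iterate_succ_apply']
        conv_lhs => rw [hG]
        rw [Tm_add, Tm_add,
          Tm_eq η α B HR HF hB' hnr' hnf' hsR hsF
            (Jbar η α HR HF ^ n * (Jbar η α HR HF ^ n)ᵀ),
          Tm_eq η α B HR HF hB' hnr' hnf' hsR hsF (Nmat η α B HR HF n), Nmat_succ]
        have hA : Jbar η α HR HF ^ (n+1) * (Jbar η α HR HF ^ (n+1))ᵀ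
            = Jbar η α HR HF * (Jbar η α HR HF ^ n * (Jbar η α HR HF ^ n)ᵀ) *
              (Jbar η α HR HF)ᵀ := by
          rw [pow_succ', transpose_mul]
          simp only [mul_assoc]
        rw [hA]
        unfold Nop
        abel
      rw [key]
      refine psd_add (psd_add ?_ ?_) ?_
      · exact Tm_psd η α B HR HF hBr hBf ih
      · exact Nop_psd η α B hB hBr hBf hsR hsF hApsd
      · exact psd_conj (Nmat_psd η α B hB hBr hBf hsR hsF n) _

end Stmt0Aux
open Stmt0Aux in
/-- stability recurrence, lower bound.  In the unlearning setup, for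
every `k ≥ 1`, `E Tr(J_0ᵀ ⋯ J_{k−1}ᵀ J_{k−1} ⋯ J_0) ≥ Tr(M_k) = Tr(J^{2k}) + Tr(N_k)`;
consequently if `Tr(N_k) → ∞` then `E‖w_k‖² → ∞`. -/
theorem stmt0 (d nr nf B : ℕ) (hd : 1 ≤ d) (hnr : 1 ≤ nr) (hnf : 1 ≤ nf)
    (hB : 0 < B) (hBr : B ≤ nr) (hBf : B ≤ nf)
    (η α : ℝ) (hη : 0 < η) (hα : α ∈ Set.Icc (0 : ℝ) 1)
    (HR : Fin nr → Matrix (Fin d) (Fin d) ℝ) (HF : Fin nf → Matrix (Fin d) (Fin d) ℝ)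
    (hHR : ∀ r, (HR r).PosSemidef) (hHF : ∀ f, (HF f).PosSemidef) :
    (∀ k, 1 ≤ k →
        ((Jbar η α HR HF ^ (2 * k)).trace + (Nmat η α B HR HF k).trace
          ≤ Ewk2 η α B HR HF k)) ∧
      (Tendsto (fun k => (Nmat η α B HR HF k).trace) atTop atTop →
        Tendsto (fun k => Ewk2 η α B HR HF k) atTop atTop) := by
  have hB' : (B : ℝ) ≠ 0 := Nat.cast_ne_zero.mpr hB.ne'
  have hnr' : (nr : ℝ) ≠ 0 := Nat.cast_ne_zero.mpr (by omega)
  have hnf' : (nf : ℝ) ≠ 0 := Nat.cast_ne_zero.mpr (by omega)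
  have hsR : ∀ r, (HR r)ᵀ = HR r := fun r => by
    have h := (hHR r).1.eq
    rwa [Matrix.conjTranspose_eq_transpose_of_trivial] at h
  have hsF : ∀ f, (HF f)ᵀ = HF f := fun f => by
    have h := (hHF f).1.eq
    rwa [Matrix.conjTranspose_eq_transpose_of_trivial] at h
  have hpow : ∀ k : ℕ, Jbar η α HR HF ^ (2 * k)
      = Jbar η α HR HF ^ k * (Jbar η α HR HF ^ k)ᵀ := by
    intro k
    rw [Matrix.transpose_pow, Jbar_symm η α HR HF hsR hsF, two_mul, pow_add]
  have main : ∀ k, 1 ≤ k →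
      (Jbar η α HR HF ^ (2 * k)).trace + (Nmat η α B HR HF k).trace
        ≤ Ewk2 η α B HR HF k := by
    intro k hk
    have hΔ := delta_psd η α B HR HF hB hBr hBf hB' hnr' hnf' hsR hsF k hk
    have htr := psd_trace_nonneg hΔ
    rw [Matrix.trace_sub, Matrix.trace_sub] at htr
    have hE : Ewk2 η α B HR HF k = ((Tm η α B HR HF)^[k] 1).trace := by
      rw [Ewk2_eq_Fk, Fk_iter]
    rw [hE, hpow k]
    linarith
  refine ⟨main, ?_⟩
  intro h
  refine tendsto_atTop_mono' atTop ?_ h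
  filter_upwards [Filter.eventually_ge_atTop 1] with k hk
  have h1 := main k hk
  have h2 : 0 ≤ (Jbar η α HR HF ^ (2 * k)).trace := by
    rw [hpow k]
    have h3 := psd_conj Matrix.PosSemidef.one (Jbar η α HR HF ^ k)
    rw [mul_one] at h3
    exact psd_trace_nonneg h3
  linarith

end
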